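/- If φ(x;y) is an equation for T, then the formula φ⁻¹(x;y) := φ(y;x) (with the roles of the variable tuples swapped) is also an equation for T. -/

import Mathlib

open FirstOrder FirstOrder.Language Set

universe u v w

namespace Equationality

variable {L : FirstOrder.Language.{u, v}}

section Struc
variable {M : Type w} [L.Structure M]

/-- The instance of the formula `φ(x; y)` at the parameter tuple `b`. -/
def instSet {α β : Type*} (φ : L.Formula (α ⊕ β)) (b : β → M) : Set (α → M) :=
  {a | φ.Realize (Sum.elim a b)}

/-- A sequence of `γ`-tuples indexed by a linear order is indiscernible if any two strictly
increasing finite subsequences satisfy the same formulas. -/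
def IsIndiscernible {I : Type*} [LinearOrder I] {γ : Type*} (a : I → γ → M) : Prop :=
  ∀ (n : ℕ) (i j : Fin n → I), StrictMono i → StrictMono j →
    ∀ φ : L.Formula (Fin n × γ),
      φ.Realize (fun p => a (i p.1) p.2) ↔ φ.Realize (fun p => a (j p.1) p.2)

/-- The complete type of a tuple over `∅`, as the set of formulas it realizes. -/
def typeOf {γ : Type*} (a : γ → M) : Set (L.Formula γ) := {φ | φ.Realize a}

/-- Membership in an instance of the swapped formula. -/
theorem mem_instSet_swap {α β : Type*} (φ : L.Formula (α ⊕ β)) (a : α → M) (b : β → M) :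
    b ∈ instSet (φ.relabel (Sum.swap : α ⊕ β → β ⊕ α)) a ↔ φ.Realize (Sum.elim a b) := by
  have h : Sum.elim b a ∘ Sum.swap = Sum.elim a b := funext fun s => by cases s <;> rfl
  simp only [instSet, Set.mem_setOf_eq, Formula.realize_relabel, h]

end Struc

variable (T : L.Theory)

/-- `φ(x; y)` is an equation for `T`: in every model of `T`, the family of finite
intersections of instances of `φ` has the descending chain condition. -/
def IsEquation {α β : Type*} (φ : L.Formula (α ⊕ β)) : Prop :=
  ∀ (M : Theory.ModelType.{u, v, max u v} T) (B : ℕ → Finset (β → M)),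
    (Antitone fun n => ⋂ b ∈ B n, instSet φ b) →
    ∃ N, ∀ n, N ≤ n → (⋂ b ∈ B n, instSet φ b) = ⋂ b ∈ B N, instSet φ b

/-- A complete type over `∅` (in the variables `γ`), presented as the set of formulas
realized by some tuple in some model of `T`. -/
def IsRealizedType {γ : Type*} (p : Set (L.Formula γ)) : Prop :=
  ∃ (M : Theory.ModelType.{u, v, max u v} T) (a : γ → M), typeOf a = p

/-- `p ⟶ q`: there are a model of `T`, a tuple `b` and an indiscernible sequence `(aᵢ)`
with `aᵢ ⊨ p(x, b)` for `i > 0` and `a₀ ⊨ q(x, b)`. -/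
def Pf {α β : Type*} (p q : Set (L.Formula (α ⊕ β))) : Prop :=
  ∃ (M : Theory.ModelType.{u, v, max u v} T) (b : β → M) (a : ℕ → α → M),
    IsIndiscernible (L := L) a ∧ (∀ i : ℕ, 0 < i → typeOf (Sum.elim (a i) b) = p) ∧
      typeOf (Sum.elim (a 0) b) = q

/-- If `φ(x; y)` is an equation for `T`, then the formula `φ⁻¹(x; y) := φ(y; x)`,
with the roles of the variable tuples swapped, is also an equation for `T`. -/
theorem isEquation_swap {α β : Type (max u v)} [Finite α] [Finite β]
    (φ : L.Formula (α ⊕ β)) (h : IsEquation T φ) :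
    IsEquation T (φ.relabel (Sum.swap : α ⊕ β → β ⊕ α)) := by
  classical
  intro M B hanti
  by_contra hcon
  push_neg at hcon
  set X : ℕ → Set (β → M) := fun n => ⋂ b ∈ B n, instSet (φ.relabel Sum.swap) b with hXdef
  -- extract a strictly decreasing subchain
  choose g hg1 hg2 using hcon
  set f : ℕ → ℕ := fun k => g^[k] 0 with hfdef
  have hf_succ : ∀ k, f (k + 1) = g (f k) := fun k => Function.iterate_succ_apply' g k 0
  have hf_mono : Monotone f := monotone_nat_of_le_succ fun k => by
    rw [hf_succ]; exact hg1 (f k)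
  have hss : ∀ k, X (f (k + 1)) ⊂ X (f k) := by
    intro k
    rw [hf_succ]
    exact Set.ssubset_iff_subset_ne.2 ⟨hanti (hg1 (f k)), hg2 (f k)⟩
  choose c hc1 hc2 using fun k => Set.exists_of_ssubset (hss k)
  -- extract witnesses from the strict drops
  have ha : ∀ k, ∃ a ∈ B (f (k + 1)), ¬ φ.Realize (Sum.elim a (c k)) := by
    intro k
    have h2 := hc2 k
    simp only [hXdef, Set.mem_iInter, not_forall] at h2
    obtain ⟨a, haB, hnot⟩ := h2
    exact ⟨a, haB, fun hr => hnot ((mem_instSet_swap φ a (c k)).2 hr)⟩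
  choose aa haB hanot using ha
  have hpos : ∀ j k, j < k → φ.Realize (Sum.elim (aa j) (c k)) := by
    intro j k hjk
    have hsub : X (f k) ⊆ X (f (j + 1)) := hanti (hf_mono hjk)
    have hmem := hsub (hc1 k)
    simp only [hXdef, Set.mem_iInter] at hmem
    exact (mem_instSet_swap φ (aa j) (c k)).1 (hmem (aa j) (haB j))
  -- pass to an ultrapower of M
  set U : Ultrafilter ℕ := Filter.hyperfilter ℕ with hUdef
  let N' : Type (max u v) := (U : Filter ℕ).Product (fun _ : ℕ => (M : Type (max u v)))
  haveI : N' ⊨ T := by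
    rw [Theory.model_iff]
    intro ψ hψ
    rw [Ultraproduct.sentence_realize]
    exact Filter.Eventually.of_forall fun _ => T.realize_sentence_of_mem hψ
  let MN : Theory.ModelType.{u, v, max u v} T := Theory.ModelType.of T N'
  let A : ℕ → α → (ℕ → M) := fun i x n => aa (n - i) x
  let C : ℕ → β → (ℕ → M) := fun j y n => c (n - j) y
  let A' : ℕ → α → N' := fun i x => (A i x : N')
  let C' : ℕ → β → N' := fun j y => (C j y : N')
  have hreal : ∀ i j, φ.Realize (Sum.elim (A' i) (C' j)) ↔
      ∀ᶠ n in (U : Filter ℕ), φ.Realize (Sum.elim (aa (n - i)) (c (n - j))) := by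
    intro i j
    have h1 : (Sum.elim (A' i) (C' j)) =
        fun s => ((Sum.elim (A i) (C j) s : ℕ → M) : N') := funext fun s => by cases s <;> rfl
    rw [h1]
    refine (Ultraproduct.realize_formula_cast (u := U) (M := fun _ : ℕ => (M : Type (max u v))) φ
      (fun s => Sum.elim (A i) (C j) s)).trans ?_
    have h2 : (fun n => φ.Realize fun s => Sum.elim (A i) (C j) s n) =
        fun n => φ.Realize (Sum.elim (aa (n - i)) (c (n - j))) := by
      funext n
      congr 1
      funext s
      cases s <;> rfl
    rw [h2]
  have hposU : ∀ j i, j < i → φ.Realize (Sum.elim (A' i) (C' j)) := by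
    intro j i hji
    rw [hreal]
    have hev : ∀ᶠ n in Filter.atTop, i ≤ n := Filter.eventually_ge_atTop i
    have hev2 : ∀ᶠ n in (U : Filter ℕ), i ≤ n := hev.filter_mono Nat.hyperfilter_le_atTop
    exact hev2.mono fun n hn => hpos (n - i) (n - j) (by omega)
  have hnegU : ∀ i, ¬ φ.Realize (Sum.elim (A' i) (C' i)) := by
    intro i hcontra
    rw [hreal] at hcontra
    obtain ⟨n, hn⟩ := hcontra.exists
    exact hanot (n - i) hn
  -- build the descending chain for φ in the ultrapower
  let D : ℕ → Finset (β → N') := fun m => (Finset.range (m + 1)).image fun k => C' k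
  have hDmono : ∀ {m m' : ℕ}, m ≤ m' → D m ⊆ D m' := fun {m m'} hm =>
    Finset.image_subset_image (Finset.range_subset_range.2 (by omega))
  have hYanti : Antitone fun n => ⋂ b ∈ D n, instSet φ b := by
    intro m m' hmm' x hx
    rw [Set.mem_iInter₂] at hx ⊢
    exact fun b hb => hx b (hDmono hmm' hb)
  obtain ⟨N, hN⟩ := h MN D hYanti
  have key := hN (N + 1) (Nat.le_succ N)
  have hin : A' (N + 1) ∈ ⋂ b ∈ D N, instSet φ b := by
    rw [Set.mem_iInter₂]
    intro b hb
    simp only [D, Finset.mem_image, Finset.mem_range] at hb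
    obtain ⟨k, hk, rfl⟩ := hb
    exact hposU k (N + 1) (by omega)
  have hnotin : A' (N + 1) ∉ ⋂ b ∈ D (N + 1), instSet φ b := by
    intro hmem
    rw [Set.mem_iInter₂] at hmem
    have hCmem : C' (N + 1) ∈ D (N + 1) := by
      simp only [D, Finset.mem_image, Finset.mem_range]
      exact ⟨N + 1, by omega, rfl⟩
    exact hnegU (N + 1) (hmem (C' (N + 1)) hCmem)
  exact hnotin (key ▸ hin)

end Equationality
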